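/- Let 0 ≤ λ_i ≤ 1 with λ_1+λ_2 < 1, λ_2+λ_3 < 1 and λ_3+λ_4 < 1, and let the 4-queue path-graph system evolve under the Top-Down priority policy π_TD^(4) defined by: if Q_1(t) > 0 then S(t) = (1,0,1,0) when Q_3(t) > 0 and S(t) = (1,0,0,1) otherwise; else if Q_2(t) > 0 then S(t) = (0,1,0,1); else S(t) = (1,0,1,0) when Q_3(t) > 0 and S(t) = (1,0,0,1) otherwise. Then limsup_{T→∞} (1/T) ∑_{t=0}^{T−1} ∑_{i=1}^{4} E[Q_i(t)] < ∞, i.e., π_TD^(4) is throughput-optimal. -/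

import Mathlib

open MeasureTheory ProbabilityTheory Filter
open scoped ENNReal

/-- The Top-Down priority policy π_TD⁽⁴⁾ for the 4-queue path graph. -/
def piTD4 (q : Fin 4 → ℕ) : Fin 4 → ℕ :=
  if 0 < q 0 then (if 0 < q 2 then ![1, 0, 1, 0] else ![1, 0, 0, 1])
  else if 0 < q 1 then ![0, 1, 0, 1]
  else (if 0 < q 2 then ![1, 0, 1, 0] else ![1, 0, 0, 1])

lemma piTD4_zero (q : Fin 4 → ℕ) (h : 0 < q 0) : piTD4 q 0 = 1 := by
  unfold piTD4; split_ifs <;> rfl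

lemma piTD4_one (q : Fin 4 → ℕ) : piTD4 q 1 = if q 0 = 0 ∧ 0 < q 1 then 1 else 0 := by
  unfold piTD4; split_ifs <;> simp_all

lemma pair12_le_one (q : Fin 4 → ℕ) :
    min (piTD4 q 1) (q 1) + min (piTD4 q 2) (q 2) ≤ 1 := by
  unfold piTD4; split_ifs <;> simp [Matrix.cons_val_one, Matrix.head_cons]

lemma pair12_zero (q : Fin 4 → ℕ)
    (h : min (piTD4 q 1) (q 1) + min (piTD4 q 2) (q 2) = 0) : q 2 = 0 := by
  by_contra hq2
  have h2 : 0 < q 2 := Nat.pos_of_ne_zero hq2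
  unfold piTD4 at h
  split_ifs at h with h1 h3 h4 <;> simp_all <;> omega

lemma pair23_le_one (q : Fin 4 → ℕ) :
    min (piTD4 q 2) (q 2) + min (piTD4 q 3) (q 3) ≤ 1 := by
  unfold piTD4; split_ifs <;> simp

lemma pair23_zero (q : Fin 4 → ℕ)
    (h : min (piTD4 q 2) (q 2) + min (piTD4 q 3) (q 3) = 0) :
    q 3 = 0 ∧ (q 2 = 0 ∨ 0 < q 1) := by
  unfold piTD4 at h
  split_ifs at h with h1 h3 h4 <;> simp_all <;> omega

/-- Lower bound for the departure of queue 1 in terms of queue 0 occupancy. -/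
lemma d1_lower (q : Fin 4 → ℕ) (c : ℕ) (h0 : q 0 ≤ 1) (hc : q 1 = 0 → c = 0) :
    c ≤ c * q 0 + c * min (piTD4 q 1) (q 1) := by
  rw [piTD4_one]
  by_cases h : q 0 = 0 ∧ 0 < q 1
  · have hm : min 1 (q 1) = 1 := by omega
    rw [if_pos h, hm, h.1]
    simp
  · rw [if_neg h]
    rcases Nat.eq_zero_or_pos (q 1) with h1 | h1
    · simp [hc h1]
    · have hq0 : q 0 = 1 := by
        rcases Nat.eq_zero_or_pos (q 0) with h2 | h2
        · exact absurd ⟨h2, h1⟩ h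
        · omega
      simp [hq0]

lemma d12_lower (q : Fin 4 → ℕ) (x c : ℕ) (hc : q 2 = 0 → x ≤ c) :
    x ≤ c + x * (min (piTD4 q 1) (q 1) + min (piTD4 q 2) (q 2)) := by
  rcases Nat.eq_zero_or_pos (min (piTD4 q 1) (q 1) + min (piTD4 q 2) (q 2)) with h | h
  · rw [h, Nat.mul_zero, Nat.add_zero]
    exact hc (pair12_zero q h)
  · calc x ≤ x * (min (piTD4 q 1) (q 1) + min (piTD4 q 2) (q 2)) :=
        Nat.le_mul_of_pos_right x h
      _ ≤ c + x * (min (piTD4 q 1) (q 1) + min (piTD4 q 2) (q 2)) := Nat.le_add_left _ _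

lemma d23_lower (q : Fin 4 → ℕ) (x c : ℕ) (hc : q 3 = 0 → q 2 = 0 ∨ 0 < q 1 → x ≤ c) :
    x ≤ c + x * (min (piTD4 q 2) (q 2) + min (piTD4 q 3) (q 3)) := by
  rcases Nat.eq_zero_or_pos (min (piTD4 q 2) (q 2) + min (piTD4 q 3) (q 3)) with h | h
  · rw [h, Nat.mul_zero, Nat.add_zero]
    exact hc (pair23_zero q h).1 (pair23_zero q h).2
  · calc x ≤ x * (min (piTD4 q 2) (q 2) + min (piTD4 q 3) (q 3)) :=
        Nat.le_mul_of_pos_right x h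
      _ ≤ c + x * (min (piTD4 q 2) (q 2) + min (piTD4 q 3) (q 3)) := Nat.le_add_left _ _

def Qdet (a : Fin 4 → ℕ → ℕ) : ℕ → Fin 4 → ℕ
  | 0 => fun _ => 0
  | t + 1 => fun i => Qdet a t i - piTD4 (Qdet a t) i + a i t

lemma Qdet_congr {a b : Fin 4 → ℕ → ℕ} : ∀ (t : ℕ),
    (∀ j s, s < t → a j s = b j s) → Qdet a t = Qdet b t := by
  intro t
  induction t with
  | zero => intro _; rfl
  | succ u ih =>
    intro h
    have hu : Qdet a u = Qdet b u := ih (fun j s hs => h j s (hs.trans (Nat.lt_succ_self u)))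
    funext i
    show Qdet a u i - piTD4 (Qdet a u) i + a i u = Qdet b u i - piTD4 (Qdet b u) i + b i u
    rw [hu, h i u (Nat.lt_succ_self u)]

lemma Qdet_congr1 {a b : Fin 4 → ℕ → ℕ} (u : ℕ)
    (h : ∀ j s, s < u → a j s = b j s) (h1 : a 1 u = b 1 u) :
    Qdet a (u + 1) 1 = Qdet b (u + 1) 1 := by
  show Qdet a u 1 - piTD4 (Qdet a u) 1 + a 1 u = Qdet b u 1 - piTD4 (Qdet b u) 1 + b 1 u
  rw [Qdet_congr u h, h1]

lemma sq_step {x x' d a e : ℝ} (hx : 0 ≤ x) (h' : x' = x - d + a)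
    (hd0 : 0 ≤ d) (hd1 : d ≤ 1) (ha0 : 0 ≤ a) (ha2 : a ≤ 2)
    (hxd : x - e ≤ x * d) : x' ^ 2 ≤ x ^ 2 + 2 * x * a - 2 * x + 2 * e + 4 := by
  nlinarith [sq_nonneg (a - d), mul_nonneg hx ha0, mul_nonneg hx hd0]

lemma cube_step {x x' d a e : ℝ} (hx : 0 ≤ x) (h' : x' = x - d + a)
    (hd0 : 0 ≤ d) (hd1 : d ≤ 1) (ha0 : 0 ≤ a) (ha2 : a ≤ 2)
    (hxd : x * x - e ≤ (x * x) * d) :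
    x' ^ 3 ≤ x ^ 3 + 3 * (x * x) * a - 3 * (x * x) + 3 * e + 12 * x + 8 := by
  have h1 : -1 ≤ a - d := by linarith
  have h2 : a - d ≤ 2 := by linarith
  have h3 : (a - d) ^ 2 ≤ 4 := by nlinarith
  have h4 : (a - d) ^ 3 ≤ 8 := by nlinarith
  have hx2 : 0 ≤ x * x := mul_nonneg hx hx
  have hexp : x' ^ 3 = x ^ 3 + 3 * (x * x) * (a - d) + 3 * x * (a - d) ^ 2 + (a - d) ^ 3 := by
    rw [h']; ring
  nlinarith [mul_le_mul_of_nonneg_left h3 hx]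

lemma tele (e u b : ℕ → ℝ) (ε : ℝ) (he0 : e 0 = 0) (henn : ∀ t, 0 ≤ e t)
    (hstep : ∀ t, e (t + 1) ≤ e t - ε * u t + b t) :
    ∀ T, ε * ∑ t ∈ Finset.range T, u t ≤ ∑ t ∈ Finset.range T, b t := by
  have key : ∀ T, e T + ε * ∑ t ∈ Finset.range T, u t ≤ ∑ t ∈ Finset.range T, b t := by
    intro T
    induction T with
    | zero => simp [he0]
    | succ T ih =>
      rw [Finset.sum_range_succ, Finset.sum_range_succ]
      have := hstep T
      linarith
  intro T
  have h1 := key T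
  have h2 := henn T
  linarith
/-- Throughput optimality of the Top-Down priority policy π_TD⁽⁴⁾ for the 4-queue path
graph: for any rates with `λ_i + λ_{i+1} < 1` (`i = 1,2,3`), the time-averaged total
expected backlog has finite limsup. -/
theorem piTD4_throughput_optimal
    {Ω : Type*} [MeasurableSpace Ω] (μ : Measure Ω) [IsProbabilityMeasure μ]
    (lam : Fin 4 → ℝ) (hlam : ∀ i, 0 ≤ lam i ∧ lam i ≤ 1)
    (hcap1 : lam 0 + lam 1 < 1) (hcap2 : lam 1 + lam 2 < 1) (hcap3 : lam 2 + lam 3 < 1)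
    (A : Fin 4 → ℕ → Ω → ℕ)
    (hAmeas : ∀ i t, Measurable (A i t))
    (hA01 : ∀ i t ω, A i t ω ≤ 1)
    (hArate : ∀ i t, μ {ω | A i t ω = 1} = ENNReal.ofReal (lam i))
    (hAindep : iIndepFun
      (fun p : Fin 4 × ℕ => fun ω => A p.1 p.2 ω) μ)
    (Q : ℕ → Fin 4 → Ω → ℕ)
    (hQ0 : ∀ i ω, Q 0 i ω = 0)
    (hQevol : ∀ t i ω,
      Q (t + 1) i ω = Q t i ω - piTD4 (fun j => Q t j ω) i + A i t ω) :
    limsup (fun T : ℕ =>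
        (∑ t ∈ Finset.range T, ∑ i, ∫⁻ ω, (Q t i ω : ℝ≥0∞) ∂μ) / (T : ℝ≥0∞))
      atTop < ⊤ := by
  -- measurability of Q
  have measQ : ∀ t i, Measurable (Q t i) := by
    intro t
    induction t with
    | zero =>
      intro i
      have h0 : Q 0 i = fun _ => 0 := funext (hQ0 i)
      rw [h0]; exact measurable_const
    | succ u ih =>
      intro i
      have h1 : Q (u + 1) i = (fun p : (Fin 4 → ℕ) × ℕ => p.1 i - piTD4 p.1 i + p.2) ∘
          (fun ω => (fun j => Q u j ω, A i u ω)) := by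
        funext ω; exact hQevol u i ω
      rw [h1]
      exact (measurable_of_countable _).comp
        ((measurable_pi_lambda _ (fun j => ih j)).prodMk (hAmeas i u))
  -- bound on Q
  have hQbd : ∀ t i ω, Q t i ω ≤ t := by
    intro t
    induction t with
    | zero => intro i ω; simp [hQ0]
    | succ u ih =>
      intro i ω
      rw [hQevol u i ω]
      have := ih i ω
      have := hA01 i u ω
      omega
  -- representation of Q in terms of the arrivals
  have repQ : ∀ t i ω, Q t i ω = Qdet (fun j s => A j s ω) t i := by
    intro t
    induction t with
    | zero => intro i ω; rw [hQ0]; rfl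
    | succ u ih =>
      intro i ω
      have hfun : (fun j => Q u j ω) = Qdet (fun j s => A j s ω) u :=
        funext fun j => ih j ω
      rw [hQevol u i ω, hfun, ih i ω]
      rfl
  -- queue 0 facts
  have hQ0bd : ∀ t ω, Q t 0 ω ≤ 1 := by
    intro t
    induction t with
    | zero => intro ω; simp [hQ0]
    | succ u ih =>
      intro ω
      rw [hQevol u 0 ω]
      rcases Nat.eq_zero_or_pos (Q u 0 ω) with h0 | h0
      · have := hA01 0 u ω; omega
      · have h1 := piTD4_zero (fun j => Q u j ω) h0
        have := hA01 0 u ω; have := ih ω; omega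
  have hq0A : ∀ u ω, Q (u + 1) 0 ω = A 0 u ω := by
    intro u ω
    rw [hQevol u 0 ω]
    rcases Nat.eq_zero_or_pos (Q u 0 ω) with h0 | h0
    · omega
    · have h1 := piTD4_zero (fun j => Q u j ω) h0
      have := hQ0bd u ω; omega
  -- cast evolution
  have cast_evol : ∀ t i ω, (Q (t + 1) i ω : ℝ) =
      (Q t i ω : ℝ) - (min (piTD4 (fun j => Q t j ω) i) (Q t i ω) : ℕ) + (A i t ω : ℝ) := by
    intro t i ω
    have h : Q (t + 1) i ω
        = Q t i ω - min (piTD4 (fun j => Q t j ω) i) (Q t i ω) + A i t ω := by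
      rw [hQevol t i ω]; omega
    rw [h, Nat.cast_add, Nat.cast_sub (min_le_right _ _)]
  -- integrability helper
  have ibddN : ∀ (f : Ω → ℕ), Measurable f → ∀ C : ℝ, (∀ ω, (f ω : ℝ) ≤ C) →
      Integrable (fun ω => (f ω : ℝ)) μ := by
    intro f hf C hC
    refine (integrable_const C).mono'
      ((measurable_of_countable (fun n : ℕ => (n : ℝ))).comp hf).aestronglyMeasurable
      (Filter.Eventually.of_forall fun ω => ?_)
    rw [Real.norm_eq_abs, abs_of_nonneg (Nat.cast_nonneg _)]
    exact hC ω
  -- measurability of functionals of the queue state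
  have measFQ : ∀ (t : ℕ) (F : (Fin 4 → ℕ) → ℕ), Measurable (fun ω => F (fun j => Q t j ω)) :=
    fun t F => (measurable_of_countable F).comp (measurable_pi_lambda _ (fun j => measQ t j))
  -- uniform bound on functionals of the queue state
  have boundF : ∀ (t : ℕ) (F : (Fin 4 → ℕ) → ℕ), ∃ C : ℕ, ∀ ω, F (fun j => Q t j ω) ≤ C := by
    intro t F
    refine ⟨Finset.univ.sup (fun v : Fin 4 → Fin (t + 1) => F (fun j => (v j : ℕ))), fun ω => ?_⟩
    have hmem := Finset.mem_univ (fun j => (⟨Q t j ω, Nat.lt_succ_of_le (hQbd t j ω)⟩ : Fin (t + 1)))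
    exact Finset.le_sup (f := fun v : Fin 4 → Fin (t + 1) => F (fun j => (v j : ℕ))) hmem
  -- integrability of functionals of the queue state
  have intN : ∀ (t : ℕ) (F : (Fin 4 → ℕ) → ℕ),
      Integrable (fun ω => (F (fun j => Q t j ω) : ℝ)) μ := by
    intro t F
    obtain ⟨C, hC⟩ := boundF t F
    exact ibddN _ (measFQ t F) C (fun ω => by exact_mod_cast hC ω)
  have intNA : ∀ (t : ℕ) (F : (Fin 4 → ℕ) → ℕ) (i : Fin 4),
      Integrable (fun ω => (F (fun j => Q t j ω) : ℝ) * (A i t ω : ℝ)) μ := by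
    intro t F i
    obtain ⟨C, hC⟩ := boundF t F
    have h1 : Integrable (fun ω => ((F (fun j => Q t j ω) * A i t ω : ℕ) : ℝ)) μ := by
      apply ibddN _ ((measFQ t F).mul (hAmeas i t)) (C : ℝ)
      intro ω
      have := Nat.mul_le_mul (hC ω) (hA01 i t ω)
      exact_mod_cast by simpa using this
    exact h1.congr (Filter.Eventually.of_forall fun ω => by push_cast; ring)
  -- expectation of arrivals
  have hEA : ∀ (i : Fin 4) (t : ℕ), ∫ ω, (A i t ω : ℝ) ∂μ = lam i := by
    intro i t
    have hset : MeasurableSet {ω | A i t ω = 1} := hAmeas i t (measurableSet_singleton 1)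
    have hfn : (fun ω => (A i t ω : ℝ)) = Set.indicator {ω | A i t ω = 1} (fun _ => (1 : ℝ)) := by
      funext ω
      rcases Nat.le_one_iff_eq_zero_or_eq_one.mp (hA01 i t ω) with h | h <;>
        simp [Set.indicator, h]
    rw [hfn, integral_indicator_const _ hset, measureReal_def, hArate i t,
      ENNReal.toReal_ofReal (hlam i).1]
    simp
  -- master independence lemma
  have master : ∀ (S : Finset (Fin 4 × ℕ)) (g : (Fin 4 → ℕ → ℕ) → ℕ),
      (∀ a b : Fin 4 → ℕ → ℕ, (∀ p : Fin 4 × ℕ, p ∈ S → a p.1 p.2 = b p.1 p.2) → g a = g b) →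
      ∀ (i : Fin 4) (t : ℕ), (i, t) ∉ S →
      IndepFun (fun ω => (g (fun j s => A j s ω) : ℝ)) (fun ω => (A i t ω : ℝ)) μ := by
    intro S g hg i t hits
    have hdisj : Disjoint S ({(i, t)} : Finset (Fin 4 × ℕ)) := by
      simp [Finset.disjoint_singleton_right, hits]
    have hind := hAindep.indepFun_finset S {(i, t)} hdisj (fun p => hAmeas p.1 p.2)
    have hφ : Measurable (fun v : (↥S → ℕ) =>
        (g (fun j s => if h : (j, s) ∈ S then v ⟨(j, s), h⟩ else 0) : ℝ)) :=
      measurable_of_countable _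
    have hψ : Measurable (fun v : (↥({(i, t)} : Finset (Fin 4 × ℕ)) → ℕ) =>
        (v ⟨(i, t), Finset.mem_singleton_self _⟩ : ℝ)) :=
      measurable_of_countable _
    have h2 := hind.comp hφ hψ
    convert h2 using 1
    funext ω
    show (g _ : ℝ) = (g _ : ℝ)
    norm_cast
    refine hg _ _ (fun p hp => ?_)
    rw [dif_pos (show (p.1, p.2) ∈ S by simpa using hp)]
    rfl
  -- key factorization: queue-state functionals vs current arrivals
  have key : ∀ (t : ℕ) (F : (Fin 4 → ℕ) → ℕ) (i : Fin 4),
      ∫ ω, (F (fun j => Q t j ω) : ℝ) * (A i t ω : ℝ) ∂μ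
        = (∫ ω, (F (fun j => Q t j ω) : ℝ) ∂μ) * lam i := by
    intro t F i
    have hrep : (fun ω => (F (fun j => Q t j ω) : ℝ))
        = fun ω => ((fun a => F (Qdet a t)) (fun j s => A j s ω) : ℝ) := by
      funext ω
      norm_cast
      exact congrArg F (funext fun j => repQ t j ω)
    have hnm : (i, t) ∉ Finset.univ ×ˢ Finset.range t := by simp
    have hind : IndepFun (fun ω => (F (fun j => Q t j ω) : ℝ)) (fun ω => (A i t ω : ℝ)) μ := by
      rw [hrep]
      exact master (Finset.univ ×ˢ Finset.range t) (fun a => F (Qdet a t))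
        (fun a b hab => congrArg F (Qdet_congr t (fun j s hs => hab (j, s)
          (by simp [Finset.mem_product, hs])))) i t hnm
    have h1 := hind.integral_fun_mul_eq_mul_integral
      (((measurable_of_countable (fun n : ℕ => (n : ℝ))).comp (measFQ t F)).aestronglyMeasurable)
      (((measurable_of_countable (fun n : ℕ => (n : ℝ))).comp (hAmeas i t)).aestronglyMeasurable)
    rw [hEA i t] at h1
    exact h1
  -- factorization of queue-1 functionals vs the previous arrival at queue 0
  have key2 : ∀ (u : ℕ) (F : ℕ → ℕ),
      ∫ ω, (F (Q (u + 1) 1 ω) : ℝ) * (A 0 u ω : ℝ) ∂μ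
        = (∫ ω, (F (Q (u + 1) 1 ω) : ℝ) ∂μ) * lam 0 := by
    intro u F
    have hrep : (fun ω => (F (Q (u + 1) 1 ω) : ℝ))
        = fun ω => ((fun a => F (Qdet a (u + 1) 1)) (fun j s => A j s ω) : ℝ) := by
      funext ω
      norm_cast
      rw [repQ]
    have hnm : ((0 : Fin 4), u) ∉ Finset.univ ×ˢ Finset.range u ∪ {((1 : Fin 4), u)} := by
      simp [Finset.mem_product]
    have hind : IndepFun (fun ω => (F (Q (u + 1) 1 ω) : ℝ)) (fun ω => (A 0 u ω : ℝ)) μ := by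
      rw [hrep]
      refine master (Finset.univ ×ˢ Finset.range u ∪ {((1 : Fin 4), u)})
        (fun a => F (Qdet a (u + 1) 1)) (fun a b hab => congrArg F ?_) 0 u hnm
      refine Qdet_congr1 u (fun j s hs => hab (j, s) ?_) (hab (1, u) ?_)
      · simp [Finset.mem_product, hs]
      · simp
    have hmF : Measurable (fun ω => F (Q (u + 1) 1 ω)) :=
      (measurable_of_countable F).comp (measQ (u + 1) 1)
    have h1 := hind.integral_fun_mul_eq_mul_integral
      (((measurable_of_countable (fun n : ℕ => (n : ℝ))).comp hmF).aestronglyMeasurable)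
      (((measurable_of_countable (fun n : ℕ => (n : ℝ))).comp (hAmeas 0 u)).aestronglyMeasurable)
    rw [hEA 0 u] at h1
    exact h1
  -- product with queue-0 occupancy
  have hq0prod : ∀ (t : ℕ) (F : ℕ → ℕ), F 0 = 0 →
      ∫ ω, (F (Q t 1 ω) : ℝ) * (Q t 0 ω : ℝ) ∂μ
        = (∫ ω, (F (Q t 1 ω) : ℝ) ∂μ) * lam 0 := by
    intro t F hF0
    cases t with
    | zero => simp [hQ0, hF0]
    | succ u =>
      simp_rw [hq0A u]
      exact key2 u F
  -- integral of a 6-term linear combination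
  have int6 : ∀ (f1 f2 f3 f4 f5 f6 : Ω → ℝ) (c1 c2 c3 c4 c5 c6 c0 : ℝ),
      Integrable f1 μ → Integrable f2 μ → Integrable f3 μ → Integrable f4 μ →
      Integrable f5 μ → Integrable f6 μ →
      ∫ ω, (c1 * f1 ω + c2 * f2 ω + c3 * f3 ω + c4 * f4 ω + c5 * f5 ω + c6 * f6 ω + c0) ∂μ
        = c1 * ∫ ω, f1 ω ∂μ + c2 * ∫ ω, f2 ω ∂μ + c3 * ∫ ω, f3 ω ∂μ + c4 * ∫ ω, f4 ω ∂μ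
          + c5 * ∫ ω, f5 ω ∂μ + c6 * ∫ ω, f6 ω ∂μ + c0 := by
    intro f1 f2 f3 f4 f5 f6 c1 c2 c3 c4 c5 c6 c0 h1 h2 h3 h4 h5 h6
    have g1 : Integrable (fun x => c1 * f1 x) μ := h1.const_mul c1
    have g2 : Integrable (fun x => c2 * f2 x) μ := h2.const_mul c2
    have g3 : Integrable (fun x => c3 * f3 x) μ := h3.const_mul c3
    have g4 : Integrable (fun x => c4 * f4 x) μ := h4.const_mul c4
    have g5 : Integrable (fun x => c5 * f5 x) μ := h5.const_mul c5
    have g6 : Integrable (fun x => c6 * f6 x) μ := h6.const_mul c6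
    have g12 : Integrable (fun x => c1 * f1 x + c2 * f2 x) μ := g1.add g2
    have g13 : Integrable (fun x => c1 * f1 x + c2 * f2 x + c3 * f3 x) μ := g12.add g3
    have g14 : Integrable (fun x => c1 * f1 x + c2 * f2 x + c3 * f3 x + c4 * f4 x) μ :=
      g13.add g4
    have g15 : Integrable
        (fun x => c1 * f1 x + c2 * f2 x + c3 * f3 x + c4 * f4 x + c5 * f5 x) μ := g14.add g5
    have g16 : Integrable
        (fun x => c1 * f1 x + c2 * f2 x + c3 * f3 x + c4 * f4 x + c5 * f5 x + c6 * f6 x) μ :=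
      g15.add g6
    rw [integral_add g16 (integrable_const c0), integral_add g15 g6, integral_add g14 g5,
      integral_add g13 g4, integral_add g12 g3, integral_add g1 g2,
      integral_const_mul, integral_const_mul, integral_const_mul, integral_const_mul,
      integral_const_mul, integral_const_mul, integral_const]
    simp
  -- drift of E[Q1^2]
  have driftA : ∀ t : ℕ,
      (∫ ω, ((Q (t + 1) 1 ω ^ 2 : ℕ) : ℝ) ∂μ)
        ≤ (∫ ω, ((Q t 1 ω ^ 2 : ℕ) : ℝ) ∂μ)
          - 2 * (1 - lam 0 - lam 1) * (∫ ω, (Q t 1 ω : ℝ) ∂μ) + 4 := by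
    intro t
    have hi1 : Integrable (fun ω => ((Q (t + 1) 1 ω ^ 2 : ℕ) : ℝ)) μ :=
      intN (t + 1) (fun q => q 1 ^ 2)
    have hf1 : Integrable (fun ω => ((Q t 1 ω ^ 2 : ℕ) : ℝ)) μ := intN t (fun q => q 1 ^ 2)
    have hf2 : Integrable (fun ω => (Q t 1 ω : ℝ) * (A 1 t ω : ℝ)) μ := intNA t (fun q => q 1) 1
    have hf3 : Integrable (fun _ : Ω => (0 : ℝ)) μ := integrable_const 0
    have hf4 : Integrable (fun ω => (Q t 1 ω : ℝ)) μ := intN t (fun q => q 1)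
    have hf5 : Integrable (fun ω => (Q t 1 ω : ℝ) * (Q t 0 ω : ℝ)) μ :=
      (intN t (fun q => q 1 * q 0)).congr (Filter.Eventually.of_forall fun ω => by push_cast; ring)
    have hpt : ∀ ω, ((Q (t + 1) 1 ω ^ 2 : ℕ) : ℝ)
        ≤ 1 * ((Q t 1 ω ^ 2 : ℕ) : ℝ) + 2 * ((Q t 1 ω : ℝ) * (A 1 t ω : ℝ))
          + 0 * (0 : ℝ) + (-2) * (Q t 1 ω : ℝ) + 2 * ((Q t 1 ω : ℝ) * (Q t 0 ω : ℝ))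
          + 0 * (0 : ℝ) + 4 := by
      intro ω
      have he1 := cast_evol t 1 ω
      have hdl := d1_lower (fun j => Q t j ω) (Q t 1 ω) (hQ0bd t ω) (fun h => h)
      have hdlR : (Q t 1 ω : ℝ) ≤ (Q t 1 ω : ℝ) * (Q t 0 ω : ℝ)
          + (Q t 1 ω : ℝ) * ((min (piTD4 (fun j => Q t j ω) 1) (Q t 1 ω) : ℕ) : ℝ) := by
        exact_mod_cast hdl
      have hdn : min (piTD4 (fun j => Q t j ω) 1) (Q t 1 ω) ≤ 1 := by
        rw [piTD4_one]; split_ifs <;> omega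
      have hdb : ((min (piTD4 (fun j => Q t j ω) 1) (Q t 1 ω) : ℕ) : ℝ) ≤ 1 := by
        exact_mod_cast hdn
      have ha2 : (A 1 t ω : ℝ) ≤ 2 := by
        have : A 1 t ω ≤ 2 := (hA01 1 t ω).trans one_le_two
        exact_mod_cast this
      have hstep := sq_step (x := (Q t 1 ω : ℝ)) (x' := (Q (t + 1) 1 ω : ℝ))
        (d := ((min (piTD4 (fun j => Q t j ω) 1) (Q t 1 ω) : ℕ) : ℝ))
        (a := (A 1 t ω : ℝ)) (e := (Q t 1 ω : ℝ) * (Q t 0 ω : ℝ))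
        (Nat.cast_nonneg _) he1 (Nat.cast_nonneg _) hdb (Nat.cast_nonneg _) ha2
        (by linarith)
      push_cast
      linarith
    have hR : Integrable (fun ω => 1 * ((Q t 1 ω ^ 2 : ℕ) : ℝ)
        + 2 * ((Q t 1 ω : ℝ) * (A 1 t ω : ℝ)) + 0 * (0 : ℝ) + (-2) * (Q t 1 ω : ℝ)
        + 2 * ((Q t 1 ω : ℝ) * (Q t 0 ω : ℝ)) + 0 * (0 : ℝ) + 4) μ :=
      ((((((hf1.const_mul 1).add (hf2.const_mul 2)).add (hf3.const_mul 0)).add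
        (hf4.const_mul (-2))).add (hf5.const_mul 2)).add (hf3.const_mul 0)).add
        (integrable_const 4)
    have hexp : ∫ ω, (1 * ((Q t 1 ω ^ 2 : ℕ) : ℝ)
        + 2 * ((Q t 1 ω : ℝ) * (A 1 t ω : ℝ)) + 0 * (0 : ℝ) + (-2) * (Q t 1 ω : ℝ)
        + 2 * ((Q t 1 ω : ℝ) * (Q t 0 ω : ℝ)) + 0 * (0 : ℝ) + 4) ∂μ
        = 1 * (∫ ω, ((Q t 1 ω ^ 2 : ℕ) : ℝ) ∂μ)
          + 2 * (∫ ω, (Q t 1 ω : ℝ) * (A 1 t ω : ℝ) ∂μ) + 0 * (∫ _ω, (0 : ℝ) ∂μ)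
          + (-2) * (∫ ω, (Q t 1 ω : ℝ) ∂μ)
          + 2 * (∫ ω, (Q t 1 ω : ℝ) * (Q t 0 ω : ℝ) ∂μ) + 0 * (∫ _ω, (0 : ℝ) ∂μ) + 4 :=
      int6 _ _ _ _ _ _ 1 2 0 (-2) 2 0 4 hf1 hf2 hf3 hf4 hf5 hf3
    have k2 : (∫ ω, (Q t 1 ω : ℝ) * (A 1 t ω : ℝ) ∂μ)
        = (∫ ω, (Q t 1 ω : ℝ) ∂μ) * lam 1 := key t (fun q => q 1) 1
    have k5 : (∫ ω, (Q t 1 ω : ℝ) * (Q t 0 ω : ℝ) ∂μ)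
        = (∫ ω, (Q t 1 ω : ℝ) ∂μ) * lam 0 := hq0prod t (fun n => n) rfl
    calc (∫ ω, ((Q (t + 1) 1 ω ^ 2 : ℕ) : ℝ) ∂μ)
        ≤ ∫ ω, (1 * ((Q t 1 ω ^ 2 : ℕ) : ℝ)
            + 2 * ((Q t 1 ω : ℝ) * (A 1 t ω : ℝ)) + 0 * (0 : ℝ) + (-2) * (Q t 1 ω : ℝ)
            + 2 * ((Q t 1 ω : ℝ) * (Q t 0 ω : ℝ)) + 0 * (0 : ℝ) + 4) ∂μ :=
          integral_mono hi1 hR hpt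
      _ = _ := hexp
      _ = (∫ ω, ((Q t 1 ω ^ 2 : ℕ) : ℝ) ∂μ)
          - 2 * (1 - lam 0 - lam 1) * (∫ ω, (Q t 1 ω : ℝ) ∂μ) + 4 := by
          rw [k2, k5]; ring
  -- drift of E[Q1^3]
  have driftB : ∀ t : ℕ,
      (∫ ω, ((Q (t + 1) 1 ω ^ 3 : ℕ) : ℝ) ∂μ)
        ≤ (∫ ω, ((Q t 1 ω ^ 3 : ℕ) : ℝ) ∂μ)
          - 3 * (1 - lam 0 - lam 1) * (∫ ω, ((Q t 1 ω ^ 2 : ℕ) : ℝ) ∂μ)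
          + (12 * (∫ ω, (Q t 1 ω : ℝ) ∂μ) + 8) := by
    intro t
    have hi1 : Integrable (fun ω => ((Q (t + 1) 1 ω ^ 3 : ℕ) : ℝ)) μ :=
      intN (t + 1) (fun q => q 1 ^ 3)
    have hf1 : Integrable (fun ω => ((Q t 1 ω ^ 3 : ℕ) : ℝ)) μ := intN t (fun q => q 1 ^ 3)
    have hf2 : Integrable (fun ω => ((Q t 1 ω ^ 2 : ℕ) : ℝ) * (A 1 t ω : ℝ)) μ :=
      intNA t (fun q => q 1 ^ 2) 1
    have hf3 : Integrable (fun _ : Ω => (0 : ℝ)) μ := integrable_const 0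
    have hf4 : Integrable (fun ω => ((Q t 1 ω ^ 2 : ℕ) : ℝ)) μ := intN t (fun q => q 1 ^ 2)
    have hf5 : Integrable (fun ω => ((Q t 1 ω * Q t 1 ω : ℕ) : ℝ) * (Q t 0 ω : ℝ)) μ :=
      (intN t (fun q => q 1 * q 1 * q 0)).congr
        (Filter.Eventually.of_forall fun ω => by push_cast; ring)
    have hf6 : Integrable (fun ω => (Q t 1 ω : ℝ)) μ := intN t (fun q => q 1)
    have hpt : ∀ ω, ((Q (t + 1) 1 ω ^ 3 : ℕ) : ℝ)
        ≤ 1 * ((Q t 1 ω ^ 3 : ℕ) : ℝ) + 3 * (((Q t 1 ω ^ 2 : ℕ) : ℝ) * (A 1 t ω : ℝ))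
          + 0 * (0 : ℝ) + (-3) * ((Q t 1 ω ^ 2 : ℕ) : ℝ)
          + 3 * (((Q t 1 ω * Q t 1 ω : ℕ) : ℝ) * (Q t 0 ω : ℝ))
          + 12 * (Q t 1 ω : ℝ) + 8 := by
      intro ω
      have he1 := cast_evol t 1 ω
      have hdl := d1_lower (fun j => Q t j ω) (Q t 1 ω * Q t 1 ω) (hQ0bd t ω)
        (fun h => by simp [h])
      have hdlR : (Q t 1 ω : ℝ) * (Q t 1 ω : ℝ)
          ≤ ((Q t 1 ω * Q t 1 ω : ℕ) : ℝ) * (Q t 0 ω : ℝ)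
            + (Q t 1 ω : ℝ) * (Q t 1 ω : ℝ)
              * ((min (piTD4 (fun j => Q t j ω) 1) (Q t 1 ω) : ℕ) : ℝ) := by
        exact_mod_cast hdl
      have hdn : min (piTD4 (fun j => Q t j ω) 1) (Q t 1 ω) ≤ 1 := by
        rw [piTD4_one]; split_ifs <;> omega
      have hdb : ((min (piTD4 (fun j => Q t j ω) 1) (Q t 1 ω) : ℕ) : ℝ) ≤ 1 := by
        exact_mod_cast hdn
      have ha2 : (A 1 t ω : ℝ) ≤ 2 := by
        have : A 1 t ω ≤ 2 := (hA01 1 t ω).trans one_le_two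
        exact_mod_cast this
      have hstep := cube_step (x := (Q t 1 ω : ℝ)) (x' := (Q (t + 1) 1 ω : ℝ))
        (d := ((min (piTD4 (fun j => Q t j ω) 1) (Q t 1 ω) : ℕ) : ℝ))
        (a := (A 1 t ω : ℝ)) (e := ((Q t 1 ω * Q t 1 ω : ℕ) : ℝ) * (Q t 0 ω : ℝ))
        (Nat.cast_nonneg _) he1 (Nat.cast_nonneg _) hdb (Nat.cast_nonneg _) ha2
        (by linarith)
      push_cast
      push_cast at hstep
      linarith
    have hR : Integrable (fun ω => 1 * ((Q t 1 ω ^ 3 : ℕ) : ℝ)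
        + 3 * (((Q t 1 ω ^ 2 : ℕ) : ℝ) * (A 1 t ω : ℝ)) + 0 * (0 : ℝ)
        + (-3) * ((Q t 1 ω ^ 2 : ℕ) : ℝ)
        + 3 * (((Q t 1 ω * Q t 1 ω : ℕ) : ℝ) * (Q t 0 ω : ℝ))
        + 12 * (Q t 1 ω : ℝ) + 8) μ :=
      ((((((hf1.const_mul 1).add (hf2.const_mul 3)).add (hf3.const_mul 0)).add
        (hf4.const_mul (-3))).add (hf5.const_mul 3)).add (hf6.const_mul 12)).add
        (integrable_const 8)
    have hexp : ∫ ω, (1 * ((Q t 1 ω ^ 3 : ℕ) : ℝ)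
        + 3 * (((Q t 1 ω ^ 2 : ℕ) : ℝ) * (A 1 t ω : ℝ)) + 0 * (0 : ℝ)
        + (-3) * ((Q t 1 ω ^ 2 : ℕ) : ℝ)
        + 3 * (((Q t 1 ω * Q t 1 ω : ℕ) : ℝ) * (Q t 0 ω : ℝ))
        + 12 * (Q t 1 ω : ℝ) + 8) ∂μ
        = 1 * (∫ ω, ((Q t 1 ω ^ 3 : ℕ) : ℝ) ∂μ)
          + 3 * (∫ ω, ((Q t 1 ω ^ 2 : ℕ) : ℝ) * (A 1 t ω : ℝ) ∂μ) + 0 * (∫ _ω, (0 : ℝ) ∂μ)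
          + (-3) * (∫ ω, ((Q t 1 ω ^ 2 : ℕ) : ℝ) ∂μ)
          + 3 * (∫ ω, ((Q t 1 ω * Q t 1 ω : ℕ) : ℝ) * (Q t 0 ω : ℝ) ∂μ)
          + 12 * (∫ ω, (Q t 1 ω : ℝ) ∂μ) + 8 :=
      int6 _ _ _ _ _ _ 1 3 0 (-3) 3 12 8 hf1 hf2 hf3 hf4 hf5 hf6
    have k2 : (∫ ω, ((Q t 1 ω ^ 2 : ℕ) : ℝ) * (A 1 t ω : ℝ) ∂μ)
        = (∫ ω, ((Q t 1 ω ^ 2 : ℕ) : ℝ) ∂μ) * lam 1 := key t (fun q => q 1 ^ 2) 1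
    have k5 : (∫ ω, ((Q t 1 ω * Q t 1 ω : ℕ) : ℝ) * (Q t 0 ω : ℝ) ∂μ)
        = (∫ ω, ((Q t 1 ω * Q t 1 ω : ℕ) : ℝ) ∂μ) * lam 0 := hq0prod t (fun n => n * n) rfl
    have hvv : (∫ ω, ((Q t 1 ω * Q t 1 ω : ℕ) : ℝ) ∂μ)
        = ∫ ω, ((Q t 1 ω ^ 2 : ℕ) : ℝ) ∂μ :=
      integral_congr_ae (Filter.Eventually.of_forall fun ω => by push_cast; ring)
    calc (∫ ω, ((Q (t + 1) 1 ω ^ 3 : ℕ) : ℝ) ∂μ)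
        ≤ ∫ ω, (1 * ((Q t 1 ω ^ 3 : ℕ) : ℝ)
            + 3 * (((Q t 1 ω ^ 2 : ℕ) : ℝ) * (A 1 t ω : ℝ)) + 0 * (0 : ℝ)
            + (-3) * ((Q t 1 ω ^ 2 : ℕ) : ℝ)
            + 3 * (((Q t 1 ω * Q t 1 ω : ℕ) : ℝ) * (Q t 0 ω : ℝ))
            + 12 * (Q t 1 ω : ℝ) + 8) ∂μ := integral_mono hi1 hR hpt
      _ = _ := hexp
      _ = (∫ ω, ((Q t 1 ω ^ 3 : ℕ) : ℝ) ∂μ)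
          - 3 * (1 - lam 0 - lam 1) * (∫ ω, ((Q t 1 ω ^ 2 : ℕ) : ℝ) ∂μ)
          + (12 * (∫ ω, (Q t 1 ω : ℝ) ∂μ) + 8) := by
          rw [k2, k5, hvv]; ring
  -- drift of E[(Q1+Q2)^2]
  have driftC : ∀ t : ℕ,
      (∫ ω, (((Q (t + 1) 1 ω + Q (t + 1) 2 ω) ^ 2 : ℕ) : ℝ) ∂μ)
        ≤ (∫ ω, (((Q t 1 ω + Q t 2 ω) ^ 2 : ℕ) : ℝ) ∂μ)
          - 2 * (1 - lam 1 - lam 2) * (∫ ω, ((Q t 1 ω + Q t 2 ω : ℕ) : ℝ) ∂μ)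
          + (2 * (∫ ω, (Q t 1 ω : ℝ) ∂μ) + 4) := by
    intro t
    have hi1 : Integrable (fun ω => (((Q (t + 1) 1 ω + Q (t + 1) 2 ω) ^ 2 : ℕ) : ℝ)) μ :=
      intN (t + 1) (fun q => (q 1 + q 2) ^ 2)
    have hf1 : Integrable (fun ω => (((Q t 1 ω + Q t 2 ω) ^ 2 : ℕ) : ℝ)) μ :=
      intN t (fun q => (q 1 + q 2) ^ 2)
    have hf2 : Integrable (fun ω => ((Q t 1 ω + Q t 2 ω : ℕ) : ℝ) * (A 1 t ω : ℝ)) μ :=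
      intNA t (fun q => q 1 + q 2) 1
    have hf3 : Integrable (fun ω => ((Q t 1 ω + Q t 2 ω : ℕ) : ℝ) * (A 2 t ω : ℝ)) μ :=
      intNA t (fun q => q 1 + q 2) 2
    have hf4 : Integrable (fun ω => ((Q t 1 ω + Q t 2 ω : ℕ) : ℝ)) μ :=
      intN t (fun q => q 1 + q 2)
    have hf5 : Integrable (fun ω => (Q t 1 ω : ℝ)) μ := intN t (fun q => q 1)
    have hf6 : Integrable (fun _ : Ω => (0 : ℝ)) μ := integrable_const 0
    have hpt : ∀ ω, (((Q (t + 1) 1 ω + Q (t + 1) 2 ω) ^ 2 : ℕ) : ℝ)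
        ≤ 1 * (((Q t 1 ω + Q t 2 ω) ^ 2 : ℕ) : ℝ)
          + 2 * (((Q t 1 ω + Q t 2 ω : ℕ) : ℝ) * (A 1 t ω : ℝ))
          + 2 * (((Q t 1 ω + Q t 2 ω : ℕ) : ℝ) * (A 2 t ω : ℝ))
          + (-2) * ((Q t 1 ω + Q t 2 ω : ℕ) : ℝ)
          + 2 * (Q t 1 ω : ℝ) + 0 * (0 : ℝ) + 4 := by
      intro ω
      have he1 := cast_evol t 1 ω
      have he2 := cast_evol t 2 ω
      have hdl := d12_lower (fun j => Q t j ω) (Q t 1 ω + Q t 2 ω) (Q t 1 ω)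
        (fun h => by have h' : Q t 2 ω = 0 := h; omega)
      have hdlR : (Q t 1 ω : ℝ) + (Q t 2 ω : ℝ) ≤ (Q t 1 ω : ℝ)
          + ((Q t 1 ω : ℝ) + (Q t 2 ω : ℝ))
            * (((min (piTD4 (fun j => Q t j ω) 1) (Q t 1 ω) : ℕ) : ℝ)
              + ((min (piTD4 (fun j => Q t j ω) 2) (Q t 2 ω) : ℕ) : ℝ)) := by
        exact_mod_cast hdl
      have hdb : ((min (piTD4 (fun j => Q t j ω) 1) (Q t 1 ω) : ℕ) : ℝ)
          + ((min (piTD4 (fun j => Q t j ω) 2) (Q t 2 ω) : ℕ) : ℝ) ≤ 1 := by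
        exact_mod_cast pair12_le_one (fun j => Q t j ω)
      have ha1 : (A 1 t ω : ℝ) ≤ 1 := by exact_mod_cast hA01 1 t ω
      have ha2 : (A 2 t ω : ℝ) ≤ 1 := by exact_mod_cast hA01 2 t ω
      have hstep := sq_step (x := (Q t 1 ω : ℝ) + (Q t 2 ω : ℝ))
        (x' := (Q (t + 1) 1 ω : ℝ) + (Q (t + 1) 2 ω : ℝ))
        (d := ((min (piTD4 (fun j => Q t j ω) 1) (Q t 1 ω) : ℕ) : ℝ)
          + ((min (piTD4 (fun j => Q t j ω) 2) (Q t 2 ω) : ℕ) : ℝ))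
        (a := (A 1 t ω : ℝ) + (A 2 t ω : ℝ))
        (e := (Q t 1 ω : ℝ))
        (by positivity) (by linarith) (by positivity) hdb (by positivity)
        (by linarith) (by linarith)
      push_cast
      push_cast at hstep
      linarith
    have hR : Integrable (fun ω => 1 * (((Q t 1 ω + Q t 2 ω) ^ 2 : ℕ) : ℝ)
        + 2 * (((Q t 1 ω + Q t 2 ω : ℕ) : ℝ) * (A 1 t ω : ℝ))
        + 2 * (((Q t 1 ω + Q t 2 ω : ℕ) : ℝ) * (A 2 t ω : ℝ))
        + (-2) * ((Q t 1 ω + Q t 2 ω : ℕ) : ℝ)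
        + 2 * (Q t 1 ω : ℝ) + 0 * (0 : ℝ) + 4) μ :=
      ((((((hf1.const_mul 1).add (hf2.const_mul 2)).add (hf3.const_mul 2)).add
        (hf4.const_mul (-2))).add (hf5.const_mul 2)).add (hf6.const_mul 0)).add
        (integrable_const 4)
    have hexp : ∫ ω, (1 * (((Q t 1 ω + Q t 2 ω) ^ 2 : ℕ) : ℝ)
        + 2 * (((Q t 1 ω + Q t 2 ω : ℕ) : ℝ) * (A 1 t ω : ℝ))
        + 2 * (((Q t 1 ω + Q t 2 ω : ℕ) : ℝ) * (A 2 t ω : ℝ))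
        + (-2) * ((Q t 1 ω + Q t 2 ω : ℕ) : ℝ)
        + 2 * (Q t 1 ω : ℝ) + 0 * (0 : ℝ) + 4) ∂μ
        = 1 * (∫ ω, (((Q t 1 ω + Q t 2 ω) ^ 2 : ℕ) : ℝ) ∂μ)
          + 2 * (∫ ω, ((Q t 1 ω + Q t 2 ω : ℕ) : ℝ) * (A 1 t ω : ℝ) ∂μ)
          + 2 * (∫ ω, ((Q t 1 ω + Q t 2 ω : ℕ) : ℝ) * (A 2 t ω : ℝ) ∂μ)
          + (-2) * (∫ ω, ((Q t 1 ω + Q t 2 ω : ℕ) : ℝ) ∂μ)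
          + 2 * (∫ ω, (Q t 1 ω : ℝ) ∂μ) + 0 * (∫ _ω, (0 : ℝ) ∂μ) + 4 :=
      int6 _ _ _ _ _ _ 1 2 2 (-2) 2 0 4 hf1 hf2 hf3 hf4 hf5 hf6
    have k2 : (∫ ω, ((Q t 1 ω + Q t 2 ω : ℕ) : ℝ) * (A 1 t ω : ℝ) ∂μ)
        = (∫ ω, ((Q t 1 ω + Q t 2 ω : ℕ) : ℝ) ∂μ) * lam 1 := key t (fun q => q 1 + q 2) 1
    have k3 : (∫ ω, ((Q t 1 ω + Q t 2 ω : ℕ) : ℝ) * (A 2 t ω : ℝ) ∂μ)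
        = (∫ ω, ((Q t 1 ω + Q t 2 ω : ℕ) : ℝ) ∂μ) * lam 2 := key t (fun q => q 1 + q 2) 2
    calc (∫ ω, (((Q (t + 1) 1 ω + Q (t + 1) 2 ω) ^ 2 : ℕ) : ℝ) ∂μ)
        ≤ ∫ ω, (1 * (((Q t 1 ω + Q t 2 ω) ^ 2 : ℕ) : ℝ)
            + 2 * (((Q t 1 ω + Q t 2 ω : ℕ) : ℝ) * (A 1 t ω : ℝ))
            + 2 * (((Q t 1 ω + Q t 2 ω : ℕ) : ℝ) * (A 2 t ω : ℝ))
            + (-2) * ((Q t 1 ω + Q t 2 ω : ℕ) : ℝ)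
            + 2 * (Q t 1 ω : ℝ) + 0 * (0 : ℝ) + 4) ∂μ := integral_mono hi1 hR hpt
      _ = _ := hexp
      _ = (∫ ω, (((Q t 1 ω + Q t 2 ω) ^ 2 : ℕ) : ℝ) ∂μ)
          - 2 * (1 - lam 1 - lam 2) * (∫ ω, ((Q t 1 ω + Q t 2 ω : ℕ) : ℝ) ∂μ)
          + (2 * (∫ ω, (Q t 1 ω : ℝ) ∂μ) + 4) := by
          rw [k2, k3]; ring
  -- drift of E[(Q1+Q2)^3]
  have driftD : ∀ t : ℕ,
      (∫ ω, (((Q (t + 1) 1 ω + Q (t + 1) 2 ω) ^ 3 : ℕ) : ℝ) ∂μ)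
        ≤ (∫ ω, (((Q t 1 ω + Q t 2 ω) ^ 3 : ℕ) : ℝ) ∂μ)
          - 3 * (1 - lam 1 - lam 2) * (∫ ω, (((Q t 1 ω + Q t 2 ω) ^ 2 : ℕ) : ℝ) ∂μ)
          + (3 * (∫ ω, ((Q t 1 ω ^ 2 : ℕ) : ℝ) ∂μ)
            + 12 * (∫ ω, ((Q t 1 ω + Q t 2 ω : ℕ) : ℝ) ∂μ) + 8) := by
    intro t
    have hi1 : Integrable (fun ω => (((Q (t + 1) 1 ω + Q (t + 1) 2 ω) ^ 3 : ℕ) : ℝ)) μ :=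
      intN (t + 1) (fun q => (q 1 + q 2) ^ 3)
    have hf1 : Integrable (fun ω => (((Q t 1 ω + Q t 2 ω) ^ 3 : ℕ) : ℝ)) μ :=
      intN t (fun q => (q 1 + q 2) ^ 3)
    have hf2 : Integrable (fun ω => (((Q t 1 ω + Q t 2 ω) ^ 2 : ℕ) : ℝ) * (A 1 t ω : ℝ)) μ :=
      intNA t (fun q => (q 1 + q 2) ^ 2) 1
    have hf3 : Integrable (fun ω => (((Q t 1 ω + Q t 2 ω) ^ 2 : ℕ) : ℝ) * (A 2 t ω : ℝ)) μ :=
      intNA t (fun q => (q 1 + q 2) ^ 2) 2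
    have hf4 : Integrable (fun ω => (((Q t 1 ω + Q t 2 ω) ^ 2 : ℕ) : ℝ)) μ :=
      intN t (fun q => (q 1 + q 2) ^ 2)
    have hf5 : Integrable (fun ω => ((Q t 1 ω ^ 2 : ℕ) : ℝ)) μ := intN t (fun q => q 1 ^ 2)
    have hf6 : Integrable (fun ω => ((Q t 1 ω + Q t 2 ω : ℕ) : ℝ)) μ :=
      intN t (fun q => q 1 + q 2)
    have hpt : ∀ ω, (((Q (t + 1) 1 ω + Q (t + 1) 2 ω) ^ 3 : ℕ) : ℝ)
        ≤ 1 * (((Q t 1 ω + Q t 2 ω) ^ 3 : ℕ) : ℝ)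
          + 3 * ((((Q t 1 ω + Q t 2 ω) ^ 2 : ℕ) : ℝ) * (A 1 t ω : ℝ))
          + 3 * ((((Q t 1 ω + Q t 2 ω) ^ 2 : ℕ) : ℝ) * (A 2 t ω : ℝ))
          + (-3) * (((Q t 1 ω + Q t 2 ω) ^ 2 : ℕ) : ℝ)
          + 3 * ((Q t 1 ω ^ 2 : ℕ) : ℝ)
          + 12 * ((Q t 1 ω + Q t 2 ω : ℕ) : ℝ) + 8 := by
      intro ω
      have he1 := cast_evol t 1 ω
      have he2 := cast_evol t 2 ω
      have hdl := d12_lower (fun j => Q t j ω)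
        ((Q t 1 ω + Q t 2 ω) * (Q t 1 ω + Q t 2 ω)) (Q t 1 ω ^ 2)
        (fun h => by
          have h' : Q t 2 ω = 0 := h
          simp [h', pow_two])
      have hdlR : ((Q t 1 ω : ℝ) + (Q t 2 ω : ℝ)) * ((Q t 1 ω : ℝ) + (Q t 2 ω : ℝ))
          ≤ ((Q t 1 ω ^ 2 : ℕ) : ℝ)
            + ((Q t 1 ω : ℝ) + (Q t 2 ω : ℝ)) * ((Q t 1 ω : ℝ) + (Q t 2 ω : ℝ))
              * (((min (piTD4 (fun j => Q t j ω) 1) (Q t 1 ω) : ℕ) : ℝ)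
                + ((min (piTD4 (fun j => Q t j ω) 2) (Q t 2 ω) : ℕ) : ℝ)) := by
        exact_mod_cast hdl
      have hdb : ((min (piTD4 (fun j => Q t j ω) 1) (Q t 1 ω) : ℕ) : ℝ)
          + ((min (piTD4 (fun j => Q t j ω) 2) (Q t 2 ω) : ℕ) : ℝ) ≤ 1 := by
        exact_mod_cast pair12_le_one (fun j => Q t j ω)
      have ha1 : (A 1 t ω : ℝ) ≤ 1 := by exact_mod_cast hA01 1 t ω
      have ha2 : (A 2 t ω : ℝ) ≤ 1 := by exact_mod_cast hA01 2 t ω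
      have hstep := cube_step (x := (Q t 1 ω : ℝ) + (Q t 2 ω : ℝ))
        (x' := (Q (t + 1) 1 ω : ℝ) + (Q (t + 1) 2 ω : ℝ))
        (d := ((min (piTD4 (fun j => Q t j ω) 1) (Q t 1 ω) : ℕ) : ℝ)
          + ((min (piTD4 (fun j => Q t j ω) 2) (Q t 2 ω) : ℕ) : ℝ))
        (a := (A 1 t ω : ℝ) + (A 2 t ω : ℝ))
        (e := ((Q t 1 ω ^ 2 : ℕ) : ℝ))
        (by positivity) (by linarith) (by positivity) hdb (by positivity)
        (by linarith) (by linarith)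
      push_cast
      push_cast at hstep
      linarith
    have hR : Integrable (fun ω => 1 * (((Q t 1 ω + Q t 2 ω) ^ 3 : ℕ) : ℝ)
        + 3 * ((((Q t 1 ω + Q t 2 ω) ^ 2 : ℕ) : ℝ) * (A 1 t ω : ℝ))
        + 3 * ((((Q t 1 ω + Q t 2 ω) ^ 2 : ℕ) : ℝ) * (A 2 t ω : ℝ))
        + (-3) * (((Q t 1 ω + Q t 2 ω) ^ 2 : ℕ) : ℝ)
        + 3 * ((Q t 1 ω ^ 2 : ℕ) : ℝ)
        + 12 * ((Q t 1 ω + Q t 2 ω : ℕ) : ℝ) + 8) μ :=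
      ((((((hf1.const_mul 1).add (hf2.const_mul 3)).add (hf3.const_mul 3)).add
        (hf4.const_mul (-3))).add (hf5.const_mul 3)).add (hf6.const_mul 12)).add
        (integrable_const 8)
    have hexp : ∫ ω, (1 * (((Q t 1 ω + Q t 2 ω) ^ 3 : ℕ) : ℝ)
        + 3 * ((((Q t 1 ω + Q t 2 ω) ^ 2 : ℕ) : ℝ) * (A 1 t ω : ℝ))
        + 3 * ((((Q t 1 ω + Q t 2 ω) ^ 2 : ℕ) : ℝ) * (A 2 t ω : ℝ))
        + (-3) * (((Q t 1 ω + Q t 2 ω) ^ 2 : ℕ) : ℝ)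
        + 3 * ((Q t 1 ω ^ 2 : ℕ) : ℝ)
        + 12 * ((Q t 1 ω + Q t 2 ω : ℕ) : ℝ) + 8) ∂μ
        = 1 * (∫ ω, (((Q t 1 ω + Q t 2 ω) ^ 3 : ℕ) : ℝ) ∂μ)
          + 3 * (∫ ω, (((Q t 1 ω + Q t 2 ω) ^ 2 : ℕ) : ℝ) * (A 1 t ω : ℝ) ∂μ)
          + 3 * (∫ ω, (((Q t 1 ω + Q t 2 ω) ^ 2 : ℕ) : ℝ) * (A 2 t ω : ℝ) ∂μ)
          + (-3) * (∫ ω, (((Q t 1 ω + Q t 2 ω) ^ 2 : ℕ) : ℝ) ∂μ)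
          + 3 * (∫ ω, ((Q t 1 ω ^ 2 : ℕ) : ℝ) ∂μ)
          + 12 * (∫ ω, ((Q t 1 ω + Q t 2 ω : ℕ) : ℝ) ∂μ) + 8 :=
      int6 _ _ _ _ _ _ 1 3 3 (-3) 3 12 8 hf1 hf2 hf3 hf4 hf5 hf6
    have k2 : (∫ ω, (((Q t 1 ω + Q t 2 ω) ^ 2 : ℕ) : ℝ) * (A 1 t ω : ℝ) ∂μ)
        = (∫ ω, (((Q t 1 ω + Q t 2 ω) ^ 2 : ℕ) : ℝ) ∂μ) * lam 1 :=
      key t (fun q => (q 1 + q 2) ^ 2) 1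
    have k3 : (∫ ω, (((Q t 1 ω + Q t 2 ω) ^ 2 : ℕ) : ℝ) * (A 2 t ω : ℝ) ∂μ)
        = (∫ ω, (((Q t 1 ω + Q t 2 ω) ^ 2 : ℕ) : ℝ) ∂μ) * lam 2 :=
      key t (fun q => (q 1 + q 2) ^ 2) 2
    calc (∫ ω, (((Q (t + 1) 1 ω + Q (t + 1) 2 ω) ^ 3 : ℕ) : ℝ) ∂μ)
        ≤ ∫ ω, (1 * (((Q t 1 ω + Q t 2 ω) ^ 3 : ℕ) : ℝ)
            + 3 * ((((Q t 1 ω + Q t 2 ω) ^ 2 : ℕ) : ℝ) * (A 1 t ω : ℝ))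
            + 3 * ((((Q t 1 ω + Q t 2 ω) ^ 2 : ℕ) : ℝ) * (A 2 t ω : ℝ))
            + (-3) * (((Q t 1 ω + Q t 2 ω) ^ 2 : ℕ) : ℝ)
            + 3 * ((Q t 1 ω ^ 2 : ℕ) : ℝ)
            + 12 * ((Q t 1 ω + Q t 2 ω : ℕ) : ℝ) + 8) ∂μ := integral_mono hi1 hR hpt
      _ = _ := hexp
      _ = (∫ ω, (((Q t 1 ω + Q t 2 ω) ^ 3 : ℕ) : ℝ) ∂μ)
          - 3 * (1 - lam 1 - lam 2) * (∫ ω, (((Q t 1 ω + Q t 2 ω) ^ 2 : ℕ) : ℝ) ∂μ)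
          + (3 * (∫ ω, ((Q t 1 ω ^ 2 : ℕ) : ℝ) ∂μ)
            + 12 * (∫ ω, ((Q t 1 ω + Q t 2 ω : ℕ) : ℝ) ∂μ) + 8) := by
          rw [k2, k3]; ring
  -- drift of E[(Q2+Q3)^2]
  have driftE : ∀ t : ℕ,
      (∫ ω, (((Q (t + 1) 2 ω + Q (t + 1) 3 ω) ^ 2 : ℕ) : ℝ) ∂μ)
        ≤ (∫ ω, (((Q t 2 ω + Q t 3 ω) ^ 2 : ℕ) : ℝ) ∂μ)
          - 2 * (1 - lam 2 - lam 3) * (∫ ω, ((Q t 2 ω + Q t 3 ω : ℕ) : ℝ) ∂μ)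
          + (2 * (∫ ω, (((Q t 1 ω + Q t 2 ω) ^ 2 : ℕ) : ℝ) ∂μ) + 4) := by
    intro t
    have hi1 : Integrable (fun ω => (((Q (t + 1) 2 ω + Q (t + 1) 3 ω) ^ 2 : ℕ) : ℝ)) μ :=
      intN (t + 1) (fun q => (q 2 + q 3) ^ 2)
    have hf1 : Integrable (fun ω => (((Q t 2 ω + Q t 3 ω) ^ 2 : ℕ) : ℝ)) μ :=
      intN t (fun q => (q 2 + q 3) ^ 2)
    have hf2 : Integrable (fun ω => ((Q t 2 ω + Q t 3 ω : ℕ) : ℝ) * (A 2 t ω : ℝ)) μ :=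
      intNA t (fun q => q 2 + q 3) 2
    have hf3 : Integrable (fun ω => ((Q t 2 ω + Q t 3 ω : ℕ) : ℝ) * (A 3 t ω : ℝ)) μ :=
      intNA t (fun q => q 2 + q 3) 3
    have hf4 : Integrable (fun ω => ((Q t 2 ω + Q t 3 ω : ℕ) : ℝ)) μ :=
      intN t (fun q => q 2 + q 3)
    have hf5 : Integrable (fun ω => (((Q t 1 ω + Q t 2 ω) ^ 2 : ℕ) : ℝ)) μ :=
      intN t (fun q => (q 1 + q 2) ^ 2)
    have hf6 : Integrable (fun _ : Ω => (0 : ℝ)) μ := integrable_const 0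
    have hpt : ∀ ω, (((Q (t + 1) 2 ω + Q (t + 1) 3 ω) ^ 2 : ℕ) : ℝ)
        ≤ 1 * (((Q t 2 ω + Q t 3 ω) ^ 2 : ℕ) : ℝ)
          + 2 * (((Q t 2 ω + Q t 3 ω : ℕ) : ℝ) * (A 2 t ω : ℝ))
          + 2 * (((Q t 2 ω + Q t 3 ω : ℕ) : ℝ) * (A 3 t ω : ℝ))
          + (-2) * ((Q t 2 ω + Q t 3 ω : ℕ) : ℝ)
          + 2 * (((Q t 1 ω + Q t 2 ω) ^ 2 : ℕ) : ℝ) + 0 * (0 : ℝ) + 4 := by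
      intro ω
      have he1 := cast_evol t 2 ω
      have he2 := cast_evol t 3 ω
      have hdl := d23_lower (fun j => Q t j ω) (Q t 2 ω + Q t 3 ω) ((Q t 1 ω + Q t 2 ω) ^ 2)
        (fun h3 hor => by
          have h3' : Q t 3 ω = 0 := h3
          rcases hor with h | h
          · have h2' : Q t 2 ω = 0 := h
            simp [h2', h3']
          · have h1' : 0 < Q t 1 ω := h
            have hb1 : Q t 2 ω + Q t 3 ω ≤ Q t 1 ω + Q t 2 ω := by omega
            have hb2 : Q t 1 ω + Q t 2 ω ≤ (Q t 1 ω + Q t 2 ω) ^ 2 :=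
              Nat.le_self_pow two_ne_zero _
            omega)
      have hdlR : (Q t 2 ω : ℝ) + (Q t 3 ω : ℝ) ≤ (((Q t 1 ω + Q t 2 ω) ^ 2 : ℕ) : ℝ)
          + ((Q t 2 ω : ℝ) + (Q t 3 ω : ℝ))
            * (((min (piTD4 (fun j => Q t j ω) 2) (Q t 2 ω) : ℕ) : ℝ)
              + ((min (piTD4 (fun j => Q t j ω) 3) (Q t 3 ω) : ℕ) : ℝ)) := by
        exact_mod_cast hdl
      have hdb : ((min (piTD4 (fun j => Q t j ω) 2) (Q t 2 ω) : ℕ) : ℝ)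
          + ((min (piTD4 (fun j => Q t j ω) 3) (Q t 3 ω) : ℕ) : ℝ) ≤ 1 := by
        exact_mod_cast pair23_le_one (fun j => Q t j ω)
      have ha1 : (A 2 t ω : ℝ) ≤ 1 := by exact_mod_cast hA01 2 t ω
      have ha2 : (A 3 t ω : ℝ) ≤ 1 := by exact_mod_cast hA01 3 t ω
      have hstep := sq_step (x := (Q t 2 ω : ℝ) + (Q t 3 ω : ℝ))
        (x' := (Q (t + 1) 2 ω : ℝ) + (Q (t + 1) 3 ω : ℝ))
        (d := ((min (piTD4 (fun j => Q t j ω) 2) (Q t 2 ω) : ℕ) : ℝ)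
          + ((min (piTD4 (fun j => Q t j ω) 3) (Q t 3 ω) : ℕ) : ℝ))
        (a := (A 2 t ω : ℝ) + (A 3 t ω : ℝ))
        (e := (((Q t 1 ω + Q t 2 ω) ^ 2 : ℕ) : ℝ))
        (by positivity) (by linarith) (by positivity) hdb (by positivity)
        (by linarith) (by linarith)
      push_cast
      push_cast at hstep
      linarith
    have hR : Integrable (fun ω => 1 * (((Q t 2 ω + Q t 3 ω) ^ 2 : ℕ) : ℝ)
        + 2 * (((Q t 2 ω + Q t 3 ω : ℕ) : ℝ) * (A 2 t ω : ℝ))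
        + 2 * (((Q t 2 ω + Q t 3 ω : ℕ) : ℝ) * (A 3 t ω : ℝ))
        + (-2) * ((Q t 2 ω + Q t 3 ω : ℕ) : ℝ)
        + 2 * (((Q t 1 ω + Q t 2 ω) ^ 2 : ℕ) : ℝ) + 0 * (0 : ℝ) + 4) μ :=
      ((((((hf1.const_mul 1).add (hf2.const_mul 2)).add (hf3.const_mul 2)).add
        (hf4.const_mul (-2))).add (hf5.const_mul 2)).add (hf6.const_mul 0)).add
        (integrable_const 4)
    have hexp : ∫ ω, (1 * (((Q t 2 ω + Q t 3 ω) ^ 2 : ℕ) : ℝ)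
        + 2 * (((Q t 2 ω + Q t 3 ω : ℕ) : ℝ) * (A 2 t ω : ℝ))
        + 2 * (((Q t 2 ω + Q t 3 ω : ℕ) : ℝ) * (A 3 t ω : ℝ))
        + (-2) * ((Q t 2 ω + Q t 3 ω : ℕ) : ℝ)
        + 2 * (((Q t 1 ω + Q t 2 ω) ^ 2 : ℕ) : ℝ) + 0 * (0 : ℝ) + 4) ∂μ
        = 1 * (∫ ω, (((Q t 2 ω + Q t 3 ω) ^ 2 : ℕ) : ℝ) ∂μ)
          + 2 * (∫ ω, ((Q t 2 ω + Q t 3 ω : ℕ) : ℝ) * (A 2 t ω : ℝ) ∂μ)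
          + 2 * (∫ ω, ((Q t 2 ω + Q t 3 ω : ℕ) : ℝ) * (A 3 t ω : ℝ) ∂μ)
          + (-2) * (∫ ω, ((Q t 2 ω + Q t 3 ω : ℕ) : ℝ) ∂μ)
          + 2 * (∫ ω, (((Q t 1 ω + Q t 2 ω) ^ 2 : ℕ) : ℝ) ∂μ) + 0 * (∫ _ω, (0 : ℝ) ∂μ) + 4 :=
      int6 _ _ _ _ _ _ 1 2 2 (-2) 2 0 4 hf1 hf2 hf3 hf4 hf5 hf6
    have k2 : (∫ ω, ((Q t 2 ω + Q t 3 ω : ℕ) : ℝ) * (A 2 t ω : ℝ) ∂μ)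
        = (∫ ω, ((Q t 2 ω + Q t 3 ω : ℕ) : ℝ) ∂μ) * lam 2 := key t (fun q => q 2 + q 3) 2
    have k3 : (∫ ω, ((Q t 2 ω + Q t 3 ω : ℕ) : ℝ) * (A 3 t ω : ℝ) ∂μ)
        = (∫ ω, ((Q t 2 ω + Q t 3 ω : ℕ) : ℝ) ∂μ) * lam 3 := key t (fun q => q 2 + q 3) 3
    calc (∫ ω, (((Q (t + 1) 2 ω + Q (t + 1) 3 ω) ^ 2 : ℕ) : ℝ) ∂μ)
        ≤ ∫ ω, (1 * (((Q t 2 ω + Q t 3 ω) ^ 2 : ℕ) : ℝ)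
            + 2 * (((Q t 2 ω + Q t 3 ω : ℕ) : ℝ) * (A 2 t ω : ℝ))
            + 2 * (((Q t 2 ω + Q t 3 ω : ℕ) : ℝ) * (A 3 t ω : ℝ))
            + (-2) * ((Q t 2 ω + Q t 3 ω : ℕ) : ℝ)
            + 2 * (((Q t 1 ω + Q t 2 ω) ^ 2 : ℕ) : ℝ) + 0 * (0 : ℝ) + 4) ∂μ :=
          integral_mono hi1 hR hpt
      _ = _ := hexp
      _ = (∫ ω, (((Q t 2 ω + Q t 3 ω) ^ 2 : ℕ) : ℝ) ∂μ)
          - 2 * (1 - lam 2 - lam 3) * (∫ ω, ((Q t 2 ω + Q t 3 ω : ℕ) : ℝ) ∂μ)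
          + (2 * (∫ ω, (((Q t 1 ω + Q t 2 ω) ^ 2 : ℕ) : ℝ) ∂μ) + 4) := by
          rw [k2, k3]; ring
  -- telescoped bounds
  have henn : ∀ (f : ℕ → Ω → ℕ), ∀ t : ℕ, (0:ℝ) ≤ ∫ ω, ((f t ω : ℕ) : ℝ) ∂μ :=
    fun f t => integral_nonneg fun ω => Nat.cast_nonneg _
  obtain ⟨cA, hcA0, hcA⟩ : ∃ c, 0 ≤ c ∧ ∀ T : ℕ,
      (∑ t ∈ Finset.range T, ∫ ω, (Q t 1 ω : ℝ) ∂μ) ≤ c * T := by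
    have hε : (0:ℝ) < 2 * (1 - lam 0 - lam 1) := by linarith
    refine ⟨4 / (2 * (1 - lam 0 - lam 1)), div_nonneg (by norm_num) hε.le, fun T => ?_⟩
    have h := tele (fun t => ∫ ω, ((Q t 1 ω ^ 2 : ℕ) : ℝ) ∂μ)
      (fun t => ∫ ω, (Q t 1 ω : ℝ) ∂μ) (fun _ => 4) (2 * (1 - lam 0 - lam 1))
      (by simp [hQ0]) (fun t => integral_nonneg fun ω => Nat.cast_nonneg _) driftA T
    rw [Finset.sum_const, Finset.card_range, nsmul_eq_mul] at h
    rw [div_mul_eq_mul_div, le_div_iff₀ hε]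
    nlinarith [h]
  obtain ⟨cB, hcB0, hcB⟩ : ∃ c, 0 ≤ c ∧ ∀ T : ℕ,
      (∑ t ∈ Finset.range T, ∫ ω, ((Q t 1 ω ^ 2 : ℕ) : ℝ) ∂μ) ≤ c * T := by
    have hε : (0:ℝ) < 3 * (1 - lam 0 - lam 1) := by linarith
    refine ⟨(12 * cA + 8) / (3 * (1 - lam 0 - lam 1)),
      div_nonneg (by linarith) hε.le, fun T => ?_⟩
    have h := tele (fun t => ∫ ω, ((Q t 1 ω ^ 3 : ℕ) : ℝ) ∂μ)
      (fun t => ∫ ω, ((Q t 1 ω ^ 2 : ℕ) : ℝ) ∂μ)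
      (fun t => 12 * (∫ ω, (Q t 1 ω : ℝ) ∂μ) + 8) (3 * (1 - lam 0 - lam 1))
      (by simp [hQ0]) (fun t => integral_nonneg fun ω => Nat.cast_nonneg _) driftB T
    rw [Finset.sum_add_distrib, ← Finset.mul_sum, Finset.sum_const, Finset.card_range,
      nsmul_eq_mul] at h
    rw [div_mul_eq_mul_div, le_div_iff₀ hε]
    nlinarith [h, hcA T]
  obtain ⟨cC, hcC0, hcC⟩ : ∃ c, 0 ≤ c ∧ ∀ T : ℕ,
      (∑ t ∈ Finset.range T, ∫ ω, ((Q t 1 ω + Q t 2 ω : ℕ) : ℝ) ∂μ) ≤ c * T := by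
    have hε : (0:ℝ) < 2 * (1 - lam 1 - lam 2) := by linarith
    refine ⟨(2 * cA + 4) / (2 * (1 - lam 1 - lam 2)),
      div_nonneg (by linarith) hε.le, fun T => ?_⟩
    have h := tele (fun t => ∫ ω, (((Q t 1 ω + Q t 2 ω) ^ 2 : ℕ) : ℝ) ∂μ)
      (fun t => ∫ ω, ((Q t 1 ω + Q t 2 ω : ℕ) : ℝ) ∂μ)
      (fun t => 2 * (∫ ω, (Q t 1 ω : ℝ) ∂μ) + 4) (2 * (1 - lam 1 - lam 2))
      (by simp [hQ0]) (fun t => integral_nonneg fun ω => Nat.cast_nonneg _) driftC T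
    rw [Finset.sum_add_distrib, ← Finset.mul_sum, Finset.sum_const, Finset.card_range,
      nsmul_eq_mul] at h
    rw [div_mul_eq_mul_div, le_div_iff₀ hε]
    nlinarith [h, hcA T]
  obtain ⟨cD, hcD0, hcD⟩ : ∃ c, 0 ≤ c ∧ ∀ T : ℕ,
      (∑ t ∈ Finset.range T, ∫ ω, (((Q t 1 ω + Q t 2 ω) ^ 2 : ℕ) : ℝ) ∂μ) ≤ c * T := by
    have hε : (0:ℝ) < 3 * (1 - lam 1 - lam 2) := by linarith
    refine ⟨(3 * cB + 12 * cC + 8) / (3 * (1 - lam 1 - lam 2)),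
      div_nonneg (by linarith) hε.le, fun T => ?_⟩
    have h := tele (fun t => ∫ ω, (((Q t 1 ω + Q t 2 ω) ^ 3 : ℕ) : ℝ) ∂μ)
      (fun t => ∫ ω, (((Q t 1 ω + Q t 2 ω) ^ 2 : ℕ) : ℝ) ∂μ)
      (fun t => 3 * (∫ ω, ((Q t 1 ω ^ 2 : ℕ) : ℝ) ∂μ)
        + 12 * (∫ ω, ((Q t 1 ω + Q t 2 ω : ℕ) : ℝ) ∂μ) + 8) (3 * (1 - lam 1 - lam 2))
      (by simp [hQ0]) (fun t => integral_nonneg fun ω => Nat.cast_nonneg _) driftD T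
    rw [Finset.sum_add_distrib, Finset.sum_add_distrib, ← Finset.mul_sum, ← Finset.mul_sum,
      Finset.sum_const, Finset.card_range, nsmul_eq_mul] at h
    rw [div_mul_eq_mul_div, le_div_iff₀ hε]
    nlinarith [h, hcB T, hcC T]
  obtain ⟨cE, hcE0, hcE⟩ : ∃ c, 0 ≤ c ∧ ∀ T : ℕ,
      (∑ t ∈ Finset.range T, ∫ ω, ((Q t 2 ω + Q t 3 ω : ℕ) : ℝ) ∂μ) ≤ c * T := by
    have hε : (0:ℝ) < 2 * (1 - lam 2 - lam 3) := by linarith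
    refine ⟨(2 * cD + 4) / (2 * (1 - lam 2 - lam 3)),
      div_nonneg (by linarith) hε.le, fun T => ?_⟩
    have h := tele (fun t => ∫ ω, (((Q t 2 ω + Q t 3 ω) ^ 2 : ℕ) : ℝ) ∂μ)
      (fun t => ∫ ω, ((Q t 2 ω + Q t 3 ω : ℕ) : ℝ) ∂μ)
      (fun t => 2 * (∫ ω, (((Q t 1 ω + Q t 2 ω) ^ 2 : ℕ) : ℝ) ∂μ) + 4)
      (2 * (1 - lam 2 - lam 3))
      (by simp [hQ0]) (fun t => integral_nonneg fun ω => Nat.cast_nonneg _) driftE T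
    rw [Finset.sum_add_distrib, ← Finset.mul_sum, Finset.sum_const, Finset.card_range,
      nsmul_eq_mul] at h
    rw [div_mul_eq_mul_div, le_div_iff₀ hε]
    nlinarith [h, hcD T]
  -- per-slot bound on the total expected backlog
  have hper : ∀ t : ℕ, (∑ i, ∫ ω, (Q t i ω : ℝ) ∂μ)
      ≤ 1 + (∫ ω, ((Q t 1 ω + Q t 2 ω : ℕ) : ℝ) ∂μ)
        + (∫ ω, ((Q t 2 ω + Q t 3 ω : ℕ) : ℝ) ∂μ) := by
    intro t
    rw [Fin.sum_univ_four]
    have h0 : ∫ ω, (Q t 0 ω : ℝ) ∂μ ≤ 1 := by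
      have h := integral_mono (intN t (fun q => q 0)) (integrable_const 1)
        (fun ω => by show (Q t 0 ω : ℝ) ≤ 1; exact_mod_cast hQ0bd t ω)
      simpa using h
    have h12 : (∫ ω, (Q t 1 ω : ℝ) ∂μ) + (∫ ω, (Q t 2 ω : ℝ) ∂μ)
        = ∫ ω, ((Q t 1 ω + Q t 2 ω : ℕ) : ℝ) ∂μ := by
      rw [← integral_add (intN t (fun q => q 1)) (intN t (fun q => q 2))]
      exact integral_congr_ae (Filter.Eventually.of_forall fun ω => by push_cast; ring)
    have h3 : (∫ ω, (Q t 3 ω : ℝ) ∂μ) ≤ ∫ ω, ((Q t 2 ω + Q t 3 ω : ℕ) : ℝ) ∂μ :=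
      integral_mono (intN t (fun q => q 3)) (intN t (fun q => q 2 + q 3))
        (fun ω => by
          show (Q t 3 ω : ℝ) ≤ ((Q t 2 ω + Q t 3 ω : ℕ) : ℝ); exact_mod_cast Nat.le_add_left _ _)
    linarith
  have hTot : ∀ T : ℕ, (∑ t ∈ Finset.range T, ∑ i, ∫ ω, (Q t i ω : ℝ) ∂μ)
      ≤ (1 + cC + cE) * T := by
    intro T
    have h1 : (∑ t ∈ Finset.range T, ∑ i, ∫ ω, (Q t i ω : ℝ) ∂μ)
        ≤ ∑ t ∈ Finset.range T, (1 + (∫ ω, ((Q t 1 ω + Q t 2 ω : ℕ) : ℝ) ∂μ)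
          + (∫ ω, ((Q t 2 ω + Q t 3 ω : ℕ) : ℝ) ∂μ)) :=
      Finset.sum_le_sum fun t _ => hper t
    rw [Finset.sum_add_distrib, Finset.sum_add_distrib, Finset.sum_const, Finset.card_range,
      nsmul_eq_mul, mul_one] at h1
    have h2 := hcC T
    have h3 := hcE T
    nlinarith [h1]
  -- pass to ENNReal
  have lintQ : ∀ t (i : Fin 4), ∫⁻ ω, (Q t i ω : ℝ≥0∞) ∂μ
      = ENNReal.ofReal (∫ ω, (Q t i ω : ℝ) ∂μ) := by
    intro t i
    rw [ofReal_integral_eq_lintegral_ofReal (intN t (fun q => q i))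
      (Filter.Eventually.of_forall fun ω => Nat.cast_nonneg _)]
    exact lintegral_congr fun ω => (ENNReal.ofReal_natCast _).symm
  have hsum : ∀ T : ℕ, (∑ t ∈ Finset.range T, ∑ i, ∫⁻ ω, (Q t i ω : ℝ≥0∞) ∂μ)
      = ENNReal.ofReal (∑ t ∈ Finset.range T, ∑ i, ∫ ω, (Q t i ω : ℝ) ∂μ) := by
    intro T
    rw [ENNReal.ofReal_sum_of_nonneg
      (fun t _ => Finset.sum_nonneg fun i _ => integral_nonneg fun ω => Nat.cast_nonneg _)]
    refine Finset.sum_congr rfl fun t _ => ?_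
    rw [ENNReal.ofReal_sum_of_nonneg
      (fun i _ => integral_nonneg fun ω => Nat.cast_nonneg _)]
    exact Finset.sum_congr rfl fun i _ => lintQ t i
  have hC0 : (0:ℝ) ≤ 1 + cC + cE := by linarith
  have hev : ∀ T : ℕ,
      (∑ t ∈ Finset.range T, ∑ i, ∫⁻ ω, (Q t i ω : ℝ≥0∞) ∂μ) / (T : ℝ≥0∞)
        ≤ ENNReal.ofReal (1 + cC + cE) := by
    intro T
    rw [hsum T]
    have h1 : ENNReal.ofReal (∑ t ∈ Finset.range T, ∑ i, ∫ ω, (Q t i ω : ℝ) ∂μ)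
        ≤ ENNReal.ofReal ((1 + cC + cE) * T) := ENNReal.ofReal_le_ofReal (hTot T)
    have h2 : ENNReal.ofReal ((1 + cC + cE) * T)
        = ENNReal.ofReal (1 + cC + cE) * (T : ℝ≥0∞) := by
      rw [ENNReal.ofReal_mul hC0, ENNReal.ofReal_natCast]
    calc ENNReal.ofReal (∑ t ∈ Finset.range T, ∑ i, ∫ ω, (Q t i ω : ℝ) ∂μ) / (T : ℝ≥0∞)
        ≤ ENNReal.ofReal ((1 + cC + cE) * T) / (T : ℝ≥0∞) := ENNReal.div_le_div_right h1 _
      _ = ENNReal.ofReal (1 + cC + cE) * (T : ℝ≥0∞) / (T : ℝ≥0∞) := by rw [h2]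
      _ ≤ ENNReal.ofReal (1 + cC + cE) := by
          rw [mul_div_assoc]
          calc ENNReal.ofReal (1 + cC + cE) * ((T : ℝ≥0∞) / (T : ℝ≥0∞))
              ≤ ENNReal.ofReal (1 + cC + cE) * 1 :=
                mul_le_mul_right ENNReal.div_self_le_one _
            _ = ENNReal.ofReal (1 + cC + cE) := mul_one _
  exact lt_of_le_of_lt
    (limsup_le_of_le (by isBoundedDefault) (Filter.Eventually.of_forall hev))
    ENNReal.ofReal_lt_top
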